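/- Let n ≥ 2, α ∈ (0, 1), D > 0, set C_α = (1 + 2D²)/(α(1 − α)), and define w_α(x) = xₙ^α (|x′|² − C_α) for x = (x′, xₙ) ∈ ℝⁿ with xₙ > 0. Then: (a) for every x with xₙ > 0, det D²w_α(x) = 2^{n−1} xₙ^{nα−2} [α(1−α)C_α − (α² + α)|x′|²]; (b) for every x with xₙ > 0 and |x′| ≤ D, det D²w_α(x) ≥ xₙ^{nα−2}; and (c) w_α is convex on the open convex set {x : xₙ > 0, |x′| < D}. -/

import Mathlib

open Metric MeasureTheory Real

/-- The Hessian matrix of `u : ℝⁿ → ℝ` at `x`, with entries the second partial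
derivatives `∂²u/∂xᵢ∂xⱼ` computed via iterated Fréchet derivatives. -/
noncomputable def hessianMatrix {n : ℕ} (u : EuclideanSpace ℝ (Fin n) → ℝ)
    (x : EuclideanSpace ℝ (Fin n)) : Matrix (Fin n) (Fin n) ℝ :=
  Matrix.of fun i j =>
    fderiv ℝ (fun y => fderiv ℝ u y (EuclideanSpace.single j 1)) x (EuclideanSpace.single i 1)

/-- The determinant of the Hessian matrix, `det D²u(x)`. -/
noncomputable def hessianDet {n : ℕ} (u : EuclideanSpace ℝ (Fin n) → ℝ)
    (x : EuclideanSpace ℝ (Fin n)) : ℝ := (hessianMatrix u x).det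

section stmt10aux
open Real Finset


variable {m : ℕ}

noncomputable abbrev pr (m : ℕ) (i : Fin (m+1)) : EuclideanSpace ℝ (Fin (m+1)) →L[ℝ] ℝ :=
  EuclideanSpace.proj i

lemma hasF_sq (i : Fin (m+1)) (y : EuclideanSpace ℝ (Fin (m+1))) :
    HasFDerivAt (fun y : EuclideanSpace ℝ (Fin (m+1)) => y i ^ 2) ((2 * y i) • pr m i) y := by
  have h := ((EuclideanSpace.proj (𝕜 := ℝ) i).hasFDerivAt (x := y)).fun_mul
    ((EuclideanSpace.proj (𝕜 := ℝ) i).hasFDerivAt (x := y))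
  simpa [PiLp.proj_apply, pow_two, two_mul, add_smul] using h

lemma hasF_S (y : EuclideanSpace ℝ (Fin (m+1))) :
    HasFDerivAt (fun y : EuclideanSpace ℝ (Fin (m+1)) => ∑ i ∈ univ.erase (Fin.last m), y i ^ 2)
      (∑ i ∈ univ.erase (Fin.last m), (2 * y i) • pr m i) y :=
  HasFDerivAt.fun_sum fun i _ => hasF_sq i y

lemma hasF_rpow (β : ℝ) (y : EuclideanSpace ℝ (Fin (m+1))) (hy : 0 < y (Fin.last m)) :
    HasFDerivAt (fun y : EuclideanSpace ℝ (Fin (m+1)) => y (Fin.last m) ^ β)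
      ((β * y (Fin.last m) ^ (β - 1)) • pr m (Fin.last m)) y := by
  have h := (Real.hasDerivAt_rpow_const (x := y (Fin.last m)) (p := β)
    (Or.inl hy.ne')).comp_hasFDerivAt y ((EuclideanSpace.proj (𝕜 := ℝ) (Fin.last m)).hasFDerivAt (x := y))
  exact h

lemma hasF_w (α Cα : ℝ) (y : EuclideanSpace ℝ (Fin (m+1))) (hy : 0 < y (Fin.last m)) :
    HasFDerivAt (fun y : EuclideanSpace ℝ (Fin (m+1)) =>
        y (Fin.last m) ^ α * ((∑ i ∈ univ.erase (Fin.last m), y i ^ 2) - Cα))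
      (y (Fin.last m) ^ α • (∑ i ∈ univ.erase (Fin.last m), (2 * y i) • pr m i) +
        ((∑ i ∈ univ.erase (Fin.last m), y i ^ 2) - Cα) •
          ((α * y (Fin.last m) ^ (α - 1)) • pr m (Fin.last m))) y :=
  (hasF_rpow α y hy).mul ((hasF_S y).sub_const Cα)

lemma pr_single (k j : Fin (m+1)) : pr m k (EuclideanSpace.single j (1:ℝ)) = if k = j then 1 else 0 := by
  simp [PiLp.proj_apply, EuclideanSpace.single_apply]

lemma fderiv_w_eq (α Cα : ℝ) (y : EuclideanSpace ℝ (Fin (m+1))) (hy : 0 < y (Fin.last m)) (j : Fin (m+1)) :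
    fderiv ℝ (fun y : EuclideanSpace ℝ (Fin (m+1)) =>
        y (Fin.last m) ^ α * ((∑ i ∈ univ.erase (Fin.last m), y i ^ 2) - Cα)) y
      (EuclideanSpace.single j 1) =
    if j = Fin.last m then α * y (Fin.last m) ^ (α - 1) * ((∑ i ∈ univ.erase (Fin.last m), y i ^ 2) - Cα)
    else y (Fin.last m) ^ α * (2 * y j) := by
  rw [(hasF_w α Cα y hy).fderiv]
  by_cases hj : j = Fin.last m
  · simp [hj, ContinuousLinearMap.sum_apply, pr_single, mul_ite,
      Finset.sum_ite_eq', Finset.mem_erase, mul_comm]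
  · simp [hj, Ne.symm hj, ContinuousLinearMap.sum_apply, pr_single, mul_ite,
      Finset.sum_ite_eq', Finset.mem_erase, mul_comm]

lemma isOpen_U : IsOpen {y : EuclideanSpace ℝ (Fin (m+1)) | 0 < y (Fin.last m)} :=
  isOpen_lt continuous_const (EuclideanSpace.proj (𝕜 := ℝ) (Fin.last m)).continuous

lemma hessian_entry (α Cα : ℝ) (x : EuclideanSpace ℝ (Fin (m+1))) (hx : 0 < x (Fin.last m))
    (i j : Fin (m+1)) :
    hessianMatrix (fun y : EuclideanSpace ℝ (Fin (m+1)) =>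
        y (Fin.last m) ^ α * ((∑ k ∈ univ.erase (Fin.last m), y k ^ 2) - Cα)) x i j =
    if j = Fin.last m then
      (if i = Fin.last m then
        α * (α - 1) * x (Fin.last m) ^ (α - 2) * ((∑ k ∈ univ.erase (Fin.last m), x k ^ 2) - Cα)
      else 2 * α * x (Fin.last m) ^ (α - 1) * x i)
    else if i = Fin.last m then 2 * α * x (Fin.last m) ^ (α - 1) * x j
    else if i = j then 2 * x (Fin.last m) ^ α else 0 := by
  have hmem : {y : EuclideanSpace ℝ (Fin (m+1)) | 0 < y (Fin.last m)} ∈ nhds x :=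
    isOpen_U.mem_nhds hx
  by_cases hj : j = Fin.last m
  · subst hj
    have hEv : (fun y : EuclideanSpace ℝ (Fin (m+1)) =>
        fderiv ℝ (fun y : EuclideanSpace ℝ (Fin (m+1)) =>
          y (Fin.last m) ^ α * ((∑ k ∈ univ.erase (Fin.last m), y k ^ 2) - Cα)) y
          (EuclideanSpace.single (Fin.last m) 1)) =ᶠ[nhds x]
        (fun y => α * y (Fin.last m) ^ (α - 1) * ((∑ k ∈ univ.erase (Fin.last m), y k ^ 2) - Cα)) := by
      filter_upwards [hmem] with y hy
      rw [fderiv_w_eq α Cα y hy, if_pos rfl]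
    have hD : HasFDerivAt (fun y : EuclideanSpace ℝ (Fin (m+1)) =>
        α * y (Fin.last m) ^ (α - 1) * ((∑ k ∈ univ.erase (Fin.last m), y k ^ 2) - Cα))
        (α • (x (Fin.last m) ^ (α - 1) • (∑ k ∈ univ.erase (Fin.last m), (2 * x k) • pr m k) +
          ((∑ k ∈ univ.erase (Fin.last m), x k ^ 2) - Cα) •
            (((α - 1) * x (Fin.last m) ^ (α - 2)) • pr m (Fin.last m)))) x := by
      have h := ((hasF_rpow (α - 1) x hx).fun_mul ((hasF_S x).sub_const Cα)).const_mul α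
      rw [show α - 1 - 1 = α - 2 by ring] at h
      simpa only [mul_assoc] using h
    rw [hessianMatrix, Matrix.of_apply, hEv.fderiv_eq, hD.fderiv]
    by_cases hi : i = Fin.last m
    · simp [hi, ContinuousLinearMap.sum_apply, pr_single, mul_ite,
        Finset.sum_ite_eq', Finset.mem_erase]
      ring
    · simp [hi, Ne.symm hi, ContinuousLinearMap.sum_apply, pr_single, mul_ite,
        Finset.sum_ite_eq', Finset.mem_erase]
      ring
  · have hEv : (fun y : EuclideanSpace ℝ (Fin (m+1)) =>
        fderiv ℝ (fun y : EuclideanSpace ℝ (Fin (m+1)) =>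
          y (Fin.last m) ^ α * ((∑ k ∈ univ.erase (Fin.last m), y k ^ 2) - Cα)) y
          (EuclideanSpace.single j 1)) =ᶠ[nhds x]
        (fun y => y (Fin.last m) ^ α * (2 * y j)) := by
      filter_upwards [hmem] with y hy
      rw [fderiv_w_eq α Cα y hy, if_neg hj]
    have hD : HasFDerivAt (fun y : EuclideanSpace ℝ (Fin (m+1)) =>
        y (Fin.last m) ^ α * (2 * y j))
        (x (Fin.last m) ^ α • ((2:ℝ) • pr m j) +
          (2 * x j) • ((α * x (Fin.last m) ^ (α - 1)) • pr m (Fin.last m))) x := by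
      have h := (hasF_rpow α x hx).mul
        (((EuclideanSpace.proj (𝕜 := ℝ) j).hasFDerivAt (x := x)).const_mul 2)
      exact h
    rw [hessianMatrix, Matrix.of_apply, hEv.fderiv_eq, hD.fderiv]
    by_cases hi : i = Fin.last m
    · simp [hi, hj, Ne.symm hj, pr_single]
      ring
    · by_cases hij : i = j
      · simp [hij, hj, Ne.symm hj, pr_single, Ne.symm hi]
        ring
      · simp [hij, Ne.symm hij, hj, Ne.symm hj, hi, Ne.symm hi, pr_single]

lemma det_arrow (m : ℕ) (a c : ℝ) (ha : a ≠ 0) (b : Fin (m+1) → ℝ) :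
    (Matrix.of fun i j => if j = Fin.last m then (if i = Fin.last m then c else b i)
      else if i = Fin.last m then b j else if i = j then a else 0).det
    = a ^ m * (c - a⁻¹ * ∑ j : Fin m, b j.castSucc ^ 2) := by
  set M := (Matrix.of fun i j => if j = Fin.last m then (if i = Fin.last m then c else b i)
      else if i = Fin.last m then b j else if i = j then a else 0) with hM
  rw [← Matrix.det_submatrix_equiv_self (finSumFinEquiv : Fin m ⊕ Fin 1 ≃ Fin (m+1)) M]
  have hsub : M.submatrix finSumFinEquiv finSumFinEquiv =
      Matrix.fromBlocks (a • (1 : Matrix (Fin m) (Fin m) ℝ))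
        (Matrix.of fun i (_ : Fin 1) => b i.castSucc)
        (Matrix.of fun (_ : Fin 1) j => b j.castSucc)
        (Matrix.of fun _ _ => c) := by
    ext i j
    have hlast : ∀ k : Fin m, Fin.castAdd 1 k ≠ Fin.last m := by
      intro k
      exact (Fin.castSucc_lt_last k).ne
    have hnat : ∀ j : Fin 1, Fin.natAdd m j = Fin.last m := by
      intro j
      have : j = 0 := Subsingleton.elim _ _
      subst this
      ext
      simp [Fin.natAdd, Fin.last]
    cases i with
    | inl i => cases j with
      | inl j =>
        simp [hM, Matrix.fromBlocks, hlast, Matrix.one_apply, Fin.castSucc]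
      | inr j => simp [hM, Matrix.fromBlocks, hlast, hnat, Fin.castSucc]
    | inr i => cases j with
      | inl j => simp [hM, Matrix.fromBlocks, hlast, hnat, Fin.castSucc]
      | inr j => simp [hM, Matrix.fromBlocks, hnat]
  rw [hsub]
  haveI : Invertible (a • (1 : Matrix (Fin m) (Fin m) ℝ)) :=
    invertibleOfLeftInverse _ (a⁻¹ • (1 : Matrix (Fin m) (Fin m) ℝ))
      (by rw [Matrix.smul_mul, Matrix.mul_smul, smul_smul, Matrix.mul_one,
            inv_mul_cancel₀ ha, one_smul])
  rw [Matrix.det_fromBlocks₁₁]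
  have hinv : ⅟(a • (1 : Matrix (Fin m) (Fin m) ℝ)) = a⁻¹ • (1 : Matrix (Fin m) (Fin m) ℝ) :=
    invOf_eq_left_inv (by rw [Matrix.smul_mul, Matrix.mul_smul, smul_smul, Matrix.mul_one,
      inv_mul_cancel₀ ha, one_smul])
  rw [hinv]
  rw [Matrix.det_smul, Matrix.det_one, Fintype.card_fin, mul_one]
  congr 1
  rw [Matrix.det_fin_one]
  simp [Matrix.mul_apply, Matrix.smul_apply, Matrix.one_apply, mul_ite, Finset.mul_sum]
  ring_nf

lemma sum_erase_eq (m : ℕ) (f : Fin (m+1) → ℝ) :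
    ∑ i ∈ univ.erase (Fin.last m), f i = ∑ j : Fin m, f j.castSucc := by
  have h := Fin.sum_univ_castSucc (f := f)
  have h2 := Finset.sum_erase_add univ f (Finset.mem_univ (Fin.last m))
  linarith


lemma quad_ineq (α Cα D P Q W V vN : ℝ) (hα0 : 0 < α) (hα1 : α < 1)
    (hK : α * (1 - α) * Cα = 1 + 2 * D ^ 2)
    (hQ : 0 ≤ Q) (hQD : Q < D ^ 2) (hV : 0 ≤ V) (hW : W ^ 2 ≤ Q * V) :
    0 ≤ α * (α - 1) * vN ^ 2 * (Q - Cα) + 4 * α * P * vN * W + 2 * P ^ 2 * V := by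
  set A := α * (1 - α) * (Cα - Q) with hA
  have hαα : α * (1 - α) * Q ≤ Q := by
    nlinarith [mul_le_mul_of_nonneg_right (by nlinarith [sq_nonneg (2*α - 1)] : α * (1 - α) ≤ 1) hQ]
  have hA0 : 0 < A := by
    have : A = (1 + 2 * D ^ 2) - α * (1 - α) * Q := by rw [hA]; linarith [hK]
    rw [this]; nlinarith
  have hkey : 4 * α ^ 2 * Q ≤ 2 * A := by
    have h1 : (1 + α) * Q ≤ 2 * D ^ 2 := by
      nlinarith [mul_le_mul_of_nonneg_right hα1.le hQ]
    have h2 : α * ((1 + α) * Q) ≤ α * (2 * D ^ 2) := mul_le_mul_of_nonneg_left h1 hα0.le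
    have h3 : A = (1 + 2 * D ^ 2) - α * (1 - α) * Q := by rw [hA]; linarith [hK]
    nlinarith [h2, h3]
  have h5 : 4 * α ^ 2 * W ^ 2 ≤ 2 * A * V := by
    have : 4 * α ^ 2 * W ^ 2 ≤ 4 * α ^ 2 * (Q * V) :=
      mul_le_mul_of_nonneg_left hW (by positivity)
    nlinarith [mul_le_mul_of_nonneg_right hkey hV]
  have hgoal : 0 ≤ A * vN ^ 2 + 4 * α * P * vN * W + 2 * P ^ 2 * V := by
    nlinarith [sq_nonneg (A * vN + 2 * α * P * W), mul_nonneg (sq_nonneg P) (sub_nonneg.mpr h5), hA0.le]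
  nlinarith [hgoal]

lemma convex_set_lemma (m : ℕ) (D : ℝ) :
    Convex ℝ {x : EuclideanSpace ℝ (Fin (m+1)) | 0 < x (Fin.last m) ∧
      Real.sqrt (∑ i ∈ univ.erase (Fin.last m), x i ^ 2) < D} := by
  have h1 : Convex ℝ {x : EuclideanSpace ℝ (Fin (m+1)) | 0 < x (Fin.last m)} :=
    convex_halfSpace_gt ⟨fun a b => rfl, fun c a => rfl⟩ 0
  have h2 : Convex ℝ {x : EuclideanSpace ℝ (Fin (m+1)) |
      Real.sqrt (∑ i ∈ univ.erase (Fin.last m), x i ^ 2) < D} := by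
    have hlin : IsLinearMap ℝ (fun x : EuclideanSpace ℝ (Fin (m+1)) =>
        x - EuclideanSpace.single (Fin.last m) (x (Fin.last m))) := by
      constructor
      · intro a b
        simp only [PiLp.add_apply]
        rw [show EuclideanSpace.single (Fin.last m) (a (Fin.last m) + b (Fin.last m)) =
          EuclideanSpace.single (Fin.last m) (a (Fin.last m)) +
          EuclideanSpace.single (Fin.last m) (b (Fin.last m)) from ?_]
        · abel
        · ext i
          by_cases h : i = Fin.last m <;>
            simp [EuclideanSpace.single_apply, h, PiLp.add_apply]
      · intro c a
        simp only [PiLp.smul_apply, smul_eq_mul]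
        rw [show EuclideanSpace.single (Fin.last m) (c * a (Fin.last m)) =
          c • EuclideanSpace.single (Fin.last m) (a (Fin.last m)) from ?_]
        · module
        · ext i
          by_cases h : i = Fin.last m <;>
            simp [EuclideanSpace.single_apply, h, PiLp.smul_apply]
    have hset : {x : EuclideanSpace ℝ (Fin (m+1)) |
        Real.sqrt (∑ i ∈ univ.erase (Fin.last m), x i ^ 2) < D} =
        (fun x : EuclideanSpace ℝ (Fin (m+1)) =>
          x - EuclideanSpace.single (Fin.last m) (x (Fin.last m))) ⁻¹' (Metric.ball 0 D) := by
      ext x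
      simp only [Set.mem_setOf_eq, Set.mem_preimage, mem_ball_zero_iff]
      have hnorm : ‖x - EuclideanSpace.single (Fin.last m) (x (Fin.last m))‖ =
          Real.sqrt (∑ i ∈ univ.erase (Fin.last m), x i ^ 2) := by
        rw [EuclideanSpace.norm_eq]
        congr 1
        rw [← Finset.sum_erase_add _ _ (Finset.mem_univ (Fin.last m))]
        have hlast : ‖(x - EuclideanSpace.single (Fin.last m) (x (Fin.last m))) (Fin.last m)‖ ^ 2 = 0 := by
          simp [PiLp.sub_apply, EuclideanSpace.single_apply]
        rw [hlast, add_zero]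
        apply Finset.sum_congr rfl
        intro i hi
        have : i ≠ Fin.last m := (Finset.mem_erase.mp hi).1
        simp [PiLp.sub_apply, EuclideanSpace.single_apply, this, sq_abs]
      rw [hnorm]
    rw [hset]
    exact (convex_ball 0 D).is_linear_preimage hlin
  exact h1.inter h2

lemma convexOn_w (m : ℕ) (α Cα D : ℝ) (hα0 : 0 < α) (hα1 : α < 1) (hD : 0 < D)
    (hK : α * (1 - α) * Cα = 1 + 2 * D ^ 2) :
    ConvexOn ℝ {x : EuclideanSpace ℝ (Fin (m+1)) | 0 < x (Fin.last m) ∧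
      Real.sqrt (∑ i ∈ univ.erase (Fin.last m), x i ^ 2) < D}
      (fun x => x (Fin.last m) ^ α * ((∑ i ∈ univ.erase (Fin.last m), x i ^ 2) - Cα)) := by
  have hs := convex_set_lemma m D
  refine ⟨hs, ?_⟩
  intro x hx y hy a b ha hb hab
  set N := Fin.last m with hN
  set v : ℝ := y N - x N with hv
  set p : ℝ → ℝ := fun t => x N + t * v with hp
  set q : ℝ → ℝ := fun t => ∑ i ∈ univ.erase N, (x i + t * (y i - x i)) ^ 2 with hq
  set q1 : ℝ → ℝ := fun t => ∑ i ∈ univ.erase N, (2 * (x i + t * (y i - x i))) * (y i - x i) with hq1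
  set g : ℝ → ℝ := fun t => p t ^ α * (q t - Cα) with hg
  -- membership along the segment
  have hzmem : ∀ t ∈ Set.Icc (0:ℝ) 1, 0 < p t ∧ Real.sqrt (q t) < D := by
    intro t ht
    have hmem := hs hx hy (by linarith [ht.2] : (0:ℝ) ≤ 1 - t) ht.1 (by ring)
    obtain ⟨h1, h2⟩ := hmem
    constructor
    · have : ((1 - t) • x + t • y) N = p t := by
        simp [PiLp.add_apply, PiLp.smul_apply, hp, hv]; ring
      rwa [this] at h1
    · have : ∑ i ∈ univ.erase N, ((1 - t) • x + t • y) i ^ 2 = q t := by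
        apply Finset.sum_congr rfl
        intro i _
        simp [PiLp.add_apply, PiLp.smul_apply]; ring
      rwa [this] at h2
  -- derivative facts
  have hpd : ∀ t : ℝ, HasDerivAt p v t := fun t =>
    (hasDerivAt_mul_const v).const_add (x N)
  have hqd : ∀ t : ℝ, HasDerivAt q (q1 t) t := by
    intro t
    apply HasDerivAt.fun_sum
    intro i _
    have h := ((hasDerivAt_mul_const (x := t) (y i - x i)).const_add (x i)).fun_pow 2
    simpa using h
  have hq1d : ∀ t : ℝ, HasDerivAt q1 (∑ i ∈ univ.erase N, (2 * (y i - x i)) * (y i - x i)) t := by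
    intro t
    apply HasDerivAt.fun_sum
    intro i _
    exact (((hasDerivAt_mul_const (x := t) (y i - x i)).const_add (x i)).const_mul 2).mul_const _
  have hrp : ∀ (β : ℝ) (t : ℝ), 0 < p t → HasDerivAt (fun t => p t ^ β) (β * p t ^ (β - 1) * v) t := by
    intro β t hpt
    exact (Real.hasDerivAt_rpow_const (Or.inl hpt.ne')).comp t (hpd t)
  have hgd : ∀ t : ℝ, 0 < p t → HasDerivAt g
      (α * p t ^ (α - 1) * v * (q t - Cα) + p t ^ α * q1 t) t := by
    intro t hpt
    exact (hrp α t hpt).mul ((hqd t).sub_const Cα)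
  set g1 : ℝ → ℝ := fun t => α * p t ^ (α - 1) * v * (q t - Cα) + p t ^ α * q1 t with hg1def
  have hg1d : ∀ t : ℝ, 0 < p t → HasDerivAt g1
      ((α * ((α - 1) * p t ^ (α - 1 - 1) * v) * v) * (q t - Cα) + (α * p t ^ (α - 1) * v) * q1 t +
        ((α * p t ^ (α - 1) * v) * q1 t +
          p t ^ α * (∑ i ∈ univ.erase N, (2 * (y i - x i)) * (y i - x i)))) t := by
    intro t hpt
    have h1 : HasDerivAt (fun t => α * p t ^ (α - 1) * v * (q t - Cα))
        ((α * ((α - 1) * p t ^ (α - 1 - 1) * v) * v) * (q t - Cα) +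
          (α * p t ^ (α - 1) * v) * q1 t) t := by
      have hc : HasDerivAt (fun t => α * p t ^ (α - 1) * v)
          (α * ((α - 1) * p t ^ (α - 1 - 1) * v) * v) t :=
        ((hrp (α - 1) t hpt).const_mul α).mul_const v
      exact hc.mul ((hqd t).sub_const Cα)
    have h2 : HasDerivAt (fun t => p t ^ α * q1 t)
        ((α * p t ^ (α - 1) * v) * q1 t +
          p t ^ α * (∑ i ∈ univ.erase N, (2 * (y i - x i)) * (y i - x i))) t :=
      (hrp α t hpt).mul (hq1d t)
    exact h1.add h2
  -- openness of positivity set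
  have hU : IsOpen {t : ℝ | 0 < p t} :=
    isOpen_lt continuous_const (by fun_prop)
  -- second derivative nonneg
  have hsecond : ∀ t : ℝ, 0 < p t → Real.sqrt (q t) < D →
      0 ≤ (α * ((α - 1) * p t ^ (α - 1 - 1) * v) * v) * (q t - Cα) + (α * p t ^ (α - 1) * v) * q1 t +
        ((α * p t ^ (α - 1) * v) * q1 t +
          p t ^ α * (∑ i ∈ univ.erase N, (2 * (y i - x i)) * (y i - x i))) := by
    intro t hpt hqt
    set W : ℝ := ∑ i ∈ univ.erase N, (x i + t * (y i - x i)) * (y i - x i) with hW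
    set V : ℝ := ∑ i ∈ univ.erase N, (y i - x i) ^ 2 with hV
    have hq1W : q1 t = 2 * W := by
      rw [hq1, hW, Finset.mul_sum]
      apply Finset.sum_congr rfl
      intro i _; ring
    have hqdd : ∑ i ∈ univ.erase N, (2 * (y i - x i)) * (y i - x i) = 2 * V := by
      rw [hV, Finset.mul_sum]
      apply Finset.sum_congr rfl
      intro i _; ring
    have hqnn : 0 ≤ q t := Finset.sum_nonneg fun i _ => sq_nonneg _
    have hVnn : 0 ≤ V := Finset.sum_nonneg fun i _ => sq_nonneg _
    have hcs : W ^ 2 ≤ q t * V :=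
      Finset.sum_mul_sq_le_sq_mul_sq _ _ _
    have hQD : q t < D ^ 2 := by
      have h := Real.sq_sqrt hqnn
      nlinarith [Real.sqrt_nonneg (q t), hqt]
    have he1 : p t ^ (α - 1 - 1) = p t ^ (α - 2) := by
      rw [show α - 1 - 1 = α - 2 by ring]
    have he2 : p t ^ (α - 1) = p t ^ (α - 2) * p t := by
      have h := Real.rpow_add hpt (α - 2) 1
      rw [show α - 2 + 1 = α - 1 by ring, Real.rpow_one] at h
      exact h
    have he3 : p t ^ α = p t ^ (α - 2) * p t ^ 2 := by
      have h := Real.rpow_add hpt (α - 2) 2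
      rw [show α - 2 + 2 = α by ring, Real.rpow_two] at h
      exact h
    have hτ : 0 < p t ^ (α - 2) := Real.rpow_pos_of_pos hpt _
    have hqq := quad_ineq α Cα D (p t) (q t) W V v hα0 hα1 hK hqnn hQD hVnn hcs
    rw [hq1W, hqdd, he1, he2, he3]
    calc (0:ℝ) ≤ p t ^ (α - 2) *
          (α * (α - 1) * v ^ 2 * (q t - Cα) + 4 * α * (p t) * v * W + 2 * (p t) ^ 2 * V) :=
          mul_nonneg hτ.le hqq
      _ = α * ((α - 1) * p t ^ (α - 2) * v) * v * (q t - Cα) +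
            α * (p t ^ (α - 2) * p t) * v * (2 * W) +
            (α * (p t ^ (α - 2) * p t) * v * (2 * W) + p t ^ (α - 2) * p t ^ 2 * (2 * V)) := by
          ring
  -- 1D convexity on Icc 0 1
  have hg1cont : ConvexOn ℝ (Set.Icc (0:ℝ) 1) g := by
    apply convexOn_of_deriv2_nonneg (convex_Icc 0 1)
    · -- continuity
      intro t ht
      have hpt := (hzmem t ht).1
      apply ContinuousAt.continuousWithinAt
      have hrc : ContinuousAt (fun t => p t ^ α) t := by
        have h1 : ContinuousAt (fun u : ℝ => u ^ α) (p t) :=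
          Real.continuousAt_rpow_const _ _ (Or.inl hpt.ne')
        exact h1.comp (by fun_prop)
      exact hrc.mul (by fun_prop)
    · intro t ht
      rw [interior_Icc] at ht
      have hpt := (hzmem t (Set.Ioo_subset_Icc_self ht)).1
      exact ((hgd t hpt).differentiableAt).differentiableWithinAt
    · intro t ht
      rw [interior_Icc] at ht
      have hpt := (hzmem t (Set.Ioo_subset_Icc_self ht)).1
      have hEvt : deriv g =ᶠ[nhds t] g1 := by
        filter_upwards [hU.mem_nhds hpt] with s hs
        exact (hgd s hs).deriv
      have : DifferentiableAt ℝ g1 t := (hg1d t hpt).differentiableAt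
      exact (hEvt.differentiableAt_iff.mpr this).differentiableWithinAt
    · intro t ht
      rw [interior_Icc] at ht
      have hmem := hzmem t (Set.Ioo_subset_Icc_self ht)
      have hpt := hmem.1
      have hEvt : deriv g =ᶠ[nhds t] g1 := by
        filter_upwards [hU.mem_nhds hpt] with s hs
        exact (hgd s hs).deriv
      have h2 : deriv (deriv g) t = deriv g1 t := hEvt.deriv_eq
      have h3 : deriv g1 t = _ := (hg1d t hpt).deriv
      show 0 ≤ deriv^[2] g t
      rw [show deriv^[2] g = deriv (deriv g) from rfl, h2, h3]
      exact hsecond t hpt hmem.2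
  -- conclude
  have h01 : (0:ℝ) ∈ Set.Icc (0:ℝ) 1 := by constructor <;> norm_num
  have h11 : (1:ℝ) ∈ Set.Icc (0:ℝ) 1 := by constructor <;> norm_num
  have hmain := hg1cont.2 h01 h11 ha hb hab
  simp only [smul_eq_mul] at hmain
  have hg0 : g (a * 0 + b * 1) = g b := by norm_num
  have hb' : g b = (fun x : EuclideanSpace ℝ (Fin (m+1)) =>
      x N ^ α * ((∑ i ∈ univ.erase N, x i ^ 2) - Cα)) (a • x + b • y) := by
    have hcoord : ∀ i : Fin (m+1), (a • x + b • y) i = x i + b * (y i - x i) := by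
      intro i
      have ha' : a = 1 - b := by linarith
      simp [PiLp.add_apply, PiLp.smul_apply, ha']
      ring
    show p b ^ α * (q b - Cα) = _
    have h1 : p b = (a • x + b • y) N := by rw [hcoord N]
    have h2 : q b = ∑ i ∈ univ.erase N, (a • x + b • y) i ^ 2 := by
      apply Finset.sum_congr rfl
      intro i _
      rw [hcoord i]
    rw [h1, h2]
  have hgx : g 0 = (fun x : EuclideanSpace ℝ (Fin (m+1)) =>
      x N ^ α * ((∑ i ∈ univ.erase N, x i ^ 2) - Cα)) x := by
    show p 0 ^ α * (q 0 - Cα) = _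
    have h1 : p 0 = x N := by show x N + 0 * v = x N; ring
    have h2 : q 0 = ∑ i ∈ univ.erase N, x i ^ 2 := by
      apply Finset.sum_congr rfl
      intro i _
      show (x i + 0 * (y i - x i)) ^ 2 = _
      ring
    rw [h1, h2]
  have hgy : g 1 = (fun x : EuclideanSpace ℝ (Fin (m+1)) =>
      x N ^ α * ((∑ i ∈ univ.erase N, x i ^ 2) - Cα)) y := by
    show p 1 ^ α * (q 1 - Cα) = _
    have h1 : p 1 = y N := by show x N + 1 * (y N - x N) = y N; ring
    have h2 : q 1 = ∑ i ∈ univ.erase N, y i ^ 2 := by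
      apply Finset.sum_congr rfl
      intro i _
      show (x i + 1 * (y i - x i)) ^ 2 = _
      ring
    rw [h1, h2]
  rw [hg0, hb', hgx, hgy] at hmain
  exact hmain


lemma hessianDet_w (m : ℕ) (α Cα : ℝ) (x : EuclideanSpace ℝ (Fin (m+1)))
    (hx : 0 < x (Fin.last m)) :
    hessianDet (fun y : EuclideanSpace ℝ (Fin (m+1)) =>
        y (Fin.last m) ^ α * ((∑ k ∈ univ.erase (Fin.last m), y k ^ 2) - Cα)) x =
    2 ^ m * x (Fin.last m) ^ ((((m+1):ℕ):ℝ) * α - 2) *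
      (α * (1 - α) * Cα - (α ^ 2 + α) * ∑ i ∈ univ.erase (Fin.last m), x i ^ 2) := by
  have hMat : hessianMatrix (fun y : EuclideanSpace ℝ (Fin (m+1)) =>
      y (Fin.last m) ^ α * ((∑ k ∈ univ.erase (Fin.last m), y k ^ 2) - Cα)) x =
      Matrix.of fun i j => if j = Fin.last m then
        (if i = Fin.last m then
          α * (α - 1) * x (Fin.last m) ^ (α - 2) * ((∑ k ∈ univ.erase (Fin.last m), x k ^ 2) - Cα)
        else 2 * α * x (Fin.last m) ^ (α - 1) * x i)
      else if i = Fin.last m then 2 * α * x (Fin.last m) ^ (α - 1) * x j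
      else if i = j then 2 * x (Fin.last m) ^ α else 0 := by
    ext i j
    exact hessian_entry α Cα x hx i j
  rw [hessianDet, hMat,
    det_arrow m (2 * x (Fin.last m) ^ α)
      (α * (α - 1) * x (Fin.last m) ^ (α - 2) * ((∑ k ∈ univ.erase (Fin.last m), x k ^ 2) - Cα))
      (by positivity)
      (fun k => 2 * α * x (Fin.last m) ^ (α - 1) * x k)]
  have hsum : ∑ j : Fin m, (2 * α * x (Fin.last m) ^ (α - 1) * x j.castSucc) ^ 2 =
      4 * α ^ 2 * (x (Fin.last m) ^ (α - 1)) ^ 2 * ∑ i ∈ univ.erase (Fin.last m), x i ^ 2 := by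
    rw [sum_erase_eq m (fun i => x i ^ 2), Finset.mul_sum]
    apply Finset.sum_congr rfl
    intro i _
    ring
  rw [hsum]
  set t := x (Fin.last m) with ht
  set S := ∑ i ∈ univ.erase (Fin.last m), x i ^ 2 with hS
  have hA : (0:ℝ) < t ^ α := Real.rpow_pos_of_pos hx α
  have h1 : t ^ (α - 1) = t ^ α / t := by
    rw [Real.rpow_sub hx, Real.rpow_one]
  have h2 : t ^ (α - 2) = t ^ α / t ^ 2 := by
    rw [Real.rpow_sub hx, Real.rpow_two]
  have h3 : t ^ ((((m+1):ℕ):ℝ) * α - 2) = (t ^ α) ^ (m+1) / t ^ 2 := by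
    rw [Real.rpow_sub hx, Real.rpow_two, mul_comm, Real.rpow_mul hx.le, Real.rpow_natCast]
  rw [h1, h2, h3, mul_pow]
  have htne : t ≠ 0 := hx.ne'
  field_simp
  ring

lemma partB (m : ℕ) (α Cα D : ℝ) (hα0 : 0 < α) (hα1 : α < 1)
    (hK : α * (1 - α) * Cα = 1 + 2 * D ^ 2)
    (x : EuclideanSpace ℝ (Fin (m+1))) (hx : 0 < x (Fin.last m))
    (hsq : Real.sqrt (∑ i ∈ univ.erase (Fin.last m), x i ^ 2) ≤ D) :
    hessianDet (fun y : EuclideanSpace ℝ (Fin (m+1)) =>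
        y (Fin.last m) ^ α * ((∑ k ∈ univ.erase (Fin.last m), y k ^ 2) - Cα)) x ≥
      x (Fin.last m) ^ ((((m+1):ℕ):ℝ) * α - 2) := by
  rw [hessianDet_w m α Cα x hx]
  set t := x (Fin.last m) with ht
  set S := ∑ i ∈ univ.erase (Fin.last m), x i ^ 2 with hS
  have hS0 : 0 ≤ S := Finset.sum_nonneg fun i _ => sq_nonneg _
  have hSD : S ≤ D ^ 2 := by
    have h := Real.sq_sqrt hS0
    nlinarith [Real.sqrt_nonneg S, hsq]
  have htpos : 0 < t ^ ((((m+1):ℕ):ℝ) * α - 2) := Real.rpow_pos_of_pos hx _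
  have h2m : (1:ℝ) ≤ 2 ^ m := one_le_pow₀ (by norm_num)
  have hbr : 1 ≤ α * (1 - α) * Cα - (α ^ 2 + α) * S := by
    rw [hK]
    nlinarith [mul_le_mul_of_nonneg_right (show α ^ 2 + α ≤ 2 by nlinarith) hS0]
  set e := t ^ ((((m+1):ℕ):ℝ) * α - 2)
  calc e = 1 * e * 1 := by ring
    _ ≤ 2 ^ m * e * (α * (1 - α) * Cα - (α ^ 2 + α) * S) := by
        apply mul_le_mul
        · apply mul_le_mul h2m le_rfl htpos.le (by positivity)
        · exact hbr
        · norm_num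
        · positivity

end stmt10aux

/-- The subsolution `w_α(x) = xₙ^α (|x'|² - C_α)`: explicit
Hessian determinant, lower bound, and convexity on `{xₙ > 0, |x'| < D}`. -/
theorem stmt_10 (n : ℕ) (hn : 2 ≤ n) (α D : ℝ)
    (hα0 : 0 < α) (hα1 : α < 1) (hD : 0 < D)
    (Cα : ℝ) (hCα : Cα = (1 + 2 * D ^ 2) / (α * (1 - α)))
    (wα : EuclideanSpace ℝ (Fin n) → ℝ)
    (hwα : wα = fun x => x ⟨n - 1, by omega⟩ ^ α *
        ((∑ i ∈ Finset.univ.erase (⟨n - 1, by omega⟩ : Fin n), x i ^ 2) - Cα)) :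
    (∀ x : EuclideanSpace ℝ (Fin n), 0 < x ⟨n - 1, by omega⟩ →
      hessianDet wα x = (2 : ℝ) ^ (n - 1) * x ⟨n - 1, by omega⟩ ^ ((n : ℝ) * α - 2) *
        (α * (1 - α) * Cα - (α ^ 2 + α) *
          ∑ i ∈ Finset.univ.erase (⟨n - 1, by omega⟩ : Fin n), x i ^ 2)) ∧
    (∀ x : EuclideanSpace ℝ (Fin n), 0 < x ⟨n - 1, by omega⟩ →
      Real.sqrt (∑ i ∈ Finset.univ.erase (⟨n - 1, by omega⟩ : Fin n), x i ^ 2) ≤ D →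
      hessianDet wα x ≥ x ⟨n - 1, by omega⟩ ^ ((n : ℝ) * α - 2)) ∧
    ConvexOn ℝ {x : EuclideanSpace ℝ (Fin n) | 0 < x ⟨n - 1, by omega⟩ ∧
      Real.sqrt (∑ i ∈ Finset.univ.erase (⟨n - 1, by omega⟩ : Fin n), x i ^ 2) < D} wα := by
  obtain ⟨m, rfl⟩ : ∃ m, n = m + 1 := ⟨n - 1, by omega⟩
  subst hwα
  have hαα : α * (1 - α) ≠ 0 := by
    have : 0 < α * (1 - α) := by nlinarith
    exact this.ne'
  have hK : α * (1 - α) * Cα = 1 + 2 * D ^ 2 := by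
    rw [hCα]
    field_simp
    exact div_self (sub_ne_zero.mpr hα1.ne')
  refine ⟨?_, ?_, ?_⟩
  · intro x hx
    exact hessianDet_w m α Cα x hx
  · intro x hx hsq
    exact partB m α Cα D hα0 hα1 hK x hx hsq
  · exact convexOn_w m α Cα D hα0 hα1 hD hK
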